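/- Let x₁, x₂, x₃, x₄ be distinct points in the Euclidean plane such that x₄ lies in the interior of the triangle x₁x₂x₃, and for {i, j, k, l} = {1, 2, 3, 4} let α_{i,j} denote the angle ∠x_k x_i x_l. Then the multiset of angles of any triangle with side lengths dist(x₁,x₂)·dist(x₃,x₄), dist(x₁,x₃)·dist(x₂,x₄), dist(x₁,x₄)·dist(x₂,x₃) is {α_{1,2} + α_{2,1}, α_{1,3} + α_{3,1}, α_{2,3} + α_{3,2}}. -/

import Mathlib

open EuclideanGeometry InnerProductGeometry

/-- The angle opposite the side of length `A` in a triangle with side lengths `A`, `B`, `C`. -/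
noncomputable def crelleF (A B C : ℝ) : ℝ := Real.arccos ((B^2+C^2-A^2)/(2*B*C))

private lemma crelleF_symm (A B C : ℝ) : crelleF A B C = crelleF A C B := by
  unfold crelleF; ring_nf

private lemma ms2 {b c y z : ℝ} (h : (b ::ₘ {c} : Multiset ℝ) = y ::ₘ {z}) :
    (b=y∧c=z)∨(b=z∧c=y) := by
  have hb : b = y ∨ b = z := by
    have hm : b ∈ (y ::ₘ {z} : Multiset ℝ) := h ▸ Multiset.mem_cons_self b {c}
    simpa using hm
  rcases hb with rfl | rfl
  · exact Or.inl ⟨rfl, Multiset.singleton_inj.1 ((Multiset.cons_inj_right b).1 h)⟩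
  · right
    refine ⟨rfl, ?_⟩
    rw [show (y ::ₘ {b} : Multiset ℝ) = b ::ₘ {y} from Multiset.cons_swap y b 0] at h
    exact Multiset.singleton_inj.1 ((Multiset.cons_inj_right b).1 h)

private lemma ms3 {a b c x y z : ℝ} (h : ({a,b,c} : Multiset ℝ) = {x,y,z}) :
    (a=x∧b=y∧c=z)∨(a=x∧b=z∧c=y)∨(a=y∧b=x∧c=z)∨(a=y∧b=z∧c=x)∨(a=z∧b=x∧c=y)∨(a=z∧b=y∧c=x) := by
  simp only [Multiset.insert_eq_cons] at h
  have ha : a = x ∨ a = y ∨ a = z := by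
    have hm : a ∈ (x ::ₘ y ::ₘ {z} : Multiset ℝ) := h ▸ Multiset.mem_cons_self a _
    simpa using hm
  rcases ha with rfl | rfl | rfl
  · rcases ms2 ((Multiset.cons_inj_right a).1 h) with ⟨h1,h2⟩|⟨h1,h2⟩
    · exact Or.inl ⟨rfl, h1, h2⟩
    · exact Or.inr (Or.inl ⟨rfl, h1, h2⟩)
  · rw [Multiset.cons_swap x a] at h
    rcases ms2 ((Multiset.cons_inj_right a).1 h) with ⟨h1,h2⟩|⟨h1,h2⟩
    · exact Or.inr (Or.inr (Or.inl ⟨rfl, h1, h2⟩))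
    · exact Or.inr (Or.inr (Or.inr (Or.inl ⟨rfl, h1, h2⟩)))
  · rw [show (x ::ₘ y ::ₘ {a} : Multiset ℝ) = a ::ₘ x ::ₘ {y} by
      rw [← Multiset.cons_zero a, ← Multiset.cons_zero y, Multiset.cons_swap y a,
        Multiset.cons_swap x a]] at h
    rcases ms2 ((Multiset.cons_inj_right a).1 h) with ⟨h1,h2⟩|⟨h1,h2⟩
    · exact Or.inr (Or.inr (Or.inr (Or.inr (Or.inl ⟨rfl, h1, h2⟩))))
    · exact Or.inr (Or.inr (Or.inr (Or.inr (Or.inr ⟨rfl, h1, h2⟩))))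

private lemma mswap12 (a b c : ℝ) : ({a,b,c} : Multiset ℝ) = {b,a,c} := by
  simp only [Multiset.insert_eq_cons]; exact Multiset.cons_swap a b {c}

private lemma mswap23 (a b c : ℝ) : ({a,b,c} : Multiset ℝ) = {a,c,b} := by
  simp only [Multiset.insert_eq_cons]
  rw [← Multiset.cons_zero c, ← Multiset.cons_zero b]
  exact congrArg (Multiset.cons a) (Multiset.cons_swap b c 0)

private lemma mswap13 (a b c : ℝ) : ({a,b,c} : Multiset ℝ) = {c,b,a} :=
  (mswap12 a b c).trans ((mswap23 b a c).trans (mswap12 b c a))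

private lemma mrot (a b c : ℝ) : ({a,b,c} : Multiset ℝ) = {b,c,a} :=
  (mswap12 a b c).trans (mswap23 b a c)

private lemma mrot2 (a b c : ℝ) : ({a,b,c} : Multiset ℝ) = {c,a,b} :=
  (mrot a b c).trans (mrot b c a)

private lemma inner_coord (u v : EuclideanSpace ℝ (Fin 2)) :
    (inner ℝ u v : ℝ) = u 0 * v 0 + u 1 * v 1 := by
  simp [PiLp.inner_apply, Fin.sum_univ_two, RCLike.inner_apply]; ring

private lemma dist_sq_coord (u v : EuclideanSpace ℝ (Fin 2)) :
    dist u v ^ 2 = (u 0 - v 0)^2 + (u 1 - v 1)^2 := by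
  rw [EuclideanSpace.dist_eq, Real.sq_sqrt (by positivity)]
  simp [Fin.sum_univ_two, Real.dist_eq, sq_abs]

private lemma sin_angle_cross (u v : EuclideanSpace ℝ (Fin 2)) :
    Real.sin (InnerProductGeometry.angle u v) * (‖u‖*‖v‖) = |u 0 * v 1 - u 1 * v 0| := by
  rw [InnerProductGeometry.sin_angle_mul_norm_mul_norm,
    show (inner ℝ u u : ℝ) * inner ℝ v v - inner ℝ u v * inner ℝ u v = (u 0 * v 1 - u 1 * v 0)^2 by
      rw [inner_coord, inner_coord, inner_coord]; ring]
  exact Real.sqrt_sq_eq_abs _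

private lemma cos_sum_key (u₁ v₁ u₃ v₃ : EuclideanSpace ℝ (Fin 2))
    (hsign : (u₁ 0 * v₁ 1 - u₁ 1 * v₁ 0) * (u₃ 0 * v₃ 1 - u₃ 1 * v₃ 0) ≤ 0) :
    Real.cos (InnerProductGeometry.angle u₁ v₁ + InnerProductGeometry.angle u₃ v₃) *
      (‖u₁‖*‖v₁‖*(‖u₃‖*‖v₃‖))
    = (inner ℝ u₁ v₁ : ℝ) * (inner ℝ u₃ v₃ : ℝ)
      + (u₁ 0 * v₁ 1 - u₁ 1 * v₁ 0) * (u₃ 0 * v₃ 1 - u₃ 1 * v₃ 0) := by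
  have s1 := sin_angle_cross u₁ v₁
  have s3 := sin_angle_cross u₃ v₃
  have c1 := InnerProductGeometry.cos_angle_mul_norm_mul_norm u₁ v₁
  have c3 := InnerProductGeometry.cos_angle_mul_norm_mul_norm u₃ v₃
  have habs : |u₁ 0 * v₁ 1 - u₁ 1 * v₁ 0| * |u₃ 0 * v₃ 1 - u₃ 1 * v₃ 0|
      = -((u₁ 0 * v₁ 1 - u₁ 1 * v₁ 0) * (u₃ 0 * v₃ 1 - u₃ 1 * v₃ 0)) := by
    rw [← abs_mul, abs_of_nonpos hsign]
  rw [Real.cos_add]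
  calc (Real.cos (angle u₁ v₁) * Real.cos (angle u₃ v₃)
        - Real.sin (angle u₁ v₁) * Real.sin (angle u₃ v₃)) * (‖u₁‖*‖v₁‖*(‖u₃‖*‖v₃‖))
      = (Real.cos (angle u₁ v₁) * (‖u₁‖*‖v₁‖)) * (Real.cos (angle u₃ v₃) * (‖u₃‖*‖v₃‖))
        - (Real.sin (angle u₁ v₁) * (‖u₁‖*‖v₁‖)) * (Real.sin (angle u₃ v₃) * (‖u₃‖*‖v₃‖)) := by
        ring
    _ = (inner ℝ u₁ v₁ : ℝ) * (inner ℝ u₃ v₃ : ℝ)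
        - |u₁ 0 * v₁ 1 - u₁ 1 * v₁ 0| * |u₃ 0 * v₃ 1 - u₃ 1 * v₃ 0| := by rw [s1, s3, c1, c3]
    _ = _ := by rw [habs]; ring

private lemma angle_combo_le {V : Type*} [NormedAddCommGroup V] [InnerProductSpace ℝ V]
    (u w : V) (b c : ℝ) (hb : 0 ≤ b) (hc : 0 ≤ c)
    (hu : u ≠ 0) (hw : w ≠ 0) (hv : b • u + c • w ≠ 0) :
    InnerProductGeometry.angle u (b • u + c • w) ≤ InnerProductGeometry.angle u w := by
  set v := b • u + c • w with hvdef
  have hnu : (0:ℝ) < ‖u‖ := norm_pos_iff.2 hu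
  have hnw : (0:ℝ) < ‖w‖ := norm_pos_iff.2 hw
  have hnv : (0:ℝ) < ‖v‖ := norm_pos_iff.2 hv
  have hdiv : (inner ℝ u w : ℝ) / (‖u‖*‖w‖) ≤ (inner ℝ u v : ℝ) / (‖u‖*‖v‖) := by
    rw [div_le_div_iff₀ (by positivity) (by positivity)]
    have hipv : (inner ℝ u v : ℝ) = b*‖u‖^2 + c*(inner ℝ u w : ℝ) := by
      rw [hvdef, inner_add_right, real_inner_smul_right, real_inner_smul_right,
        real_inner_self_eq_norm_sq]
    have h1 : ‖v‖ ≤ b*‖u‖ + c*‖w‖ := by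
      calc ‖v‖ ≤ ‖b•u‖ + ‖c•w‖ := norm_add_le _ _
        _ = b*‖u‖ + c*‖w‖ := by rw [norm_smul, norm_smul, Real.norm_eq_abs, Real.norm_eq_abs,
            abs_of_nonneg hb, abs_of_nonneg hc]
    have h2 : c*‖w‖ ≤ b*‖u‖ + ‖v‖ := by
      have hcw : c•w = v - b•u := by rw [hvdef]; abel
      calc c*‖w‖ = ‖c•w‖ := by rw [norm_smul, Real.norm_eq_abs, abs_of_nonneg hc]
        _ ≤ ‖v‖ + ‖b•u‖ := by rw [hcw]; exact norm_sub_le _ _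
        _ = b*‖u‖ + ‖v‖ := by rw [norm_smul, Real.norm_eq_abs, abs_of_nonneg hb]; ring
    have h3 := abs_real_inner_le_norm u w
    have h3r : (inner ℝ u w : ℝ) ≤ ‖u‖*‖w‖ := (abs_le.1 h3).2
    have h3l : -(‖u‖*‖w‖) ≤ (inner ℝ u w : ℝ) := (abs_le.1 h3).1
    have key : (inner ℝ u w : ℝ) * ‖v‖ ≤ (b*‖u‖^2 + c*(inner ℝ u w : ℝ)) * ‖w‖ := by
      rcases le_or_gt 0 (inner ℝ u w : ℝ) with hip | hip
      · calc (inner ℝ u w : ℝ) * ‖v‖ ≤ (inner ℝ u w : ℝ) * (b*‖u‖ + c*‖w‖) :=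
              mul_le_mul_of_nonneg_left h1 hip
          _ ≤ (b*‖u‖^2 + c*(inner ℝ u w : ℝ)) * ‖w‖ := by
              nlinarith [mul_nonneg (mul_nonneg hb hnu.le) (sub_nonneg.2 h3r)]
      · rcases le_or_gt (c*‖w‖ - ‖v‖) 0 with ht | ht
        · nlinarith [mul_nonneg (neg_nonneg.2 hip.le) (neg_nonneg.2 ht),
            mul_nonneg (mul_nonneg hb (sq_nonneg ‖u‖)) hnw.le]
        · have h4 : (-(inner ℝ u w : ℝ)) * (c*‖w‖ - ‖v‖) ≤ (‖u‖*‖w‖) * (b*‖u‖) := by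
            apply mul_le_mul (by linarith) (by linarith) ht.le (by positivity)
          nlinarith [h4]
    rw [hipv]
    nlinarith [mul_le_mul_of_nonneg_right key hnu.le]
  unfold InnerProductGeometry.angle
  rw [Real.arccos_eq_pi_div_two_sub_arcsin, Real.arccos_eq_pi_div_two_sub_arcsin]
  have := Real.monotone_arcsin hdiv
  linarith

set_option maxHeartbeats 1000000 in
private lemma pair_angle (y₁ y₂ y₃ y₄ : EuclideanSpace ℝ (Fin 2))
    (h12 : y₁ ≠ y₂) (h13 : y₁ ≠ y₃) (h14 : y₁ ≠ y₄)
    (h23 : y₂ ≠ y₃) (h24 : y₂ ≠ y₄) (h34 : y₃ ≠ y₄)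
    (a b c : ℝ) (ha : 0 ≤ a) (hb : 0 ≤ b) (hc : 0 ≤ c) (habc : a + b + c = 1)
    (hy : y₄ = a • y₁ + b • y₂ + c • y₃) :
    ∠ y₂ y₁ y₄ + ∠ y₂ y₃ y₄ =
      crelleF (dist y₁ y₃ * dist y₂ y₄) (dist y₁ y₂ * dist y₃ y₄) (dist y₁ y₄ * dist y₂ y₃) := by
  obtain rfl : a = 1 - b - c := by linarith
  set u₁ : EuclideanSpace ℝ (Fin 2) := y₂ - y₁ with hu₁
  set v₁ : EuclideanSpace ℝ (Fin 2) := y₄ - y₁ with hv₁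
  set u₃ : EuclideanSpace ℝ (Fin 2) := y₂ - y₃ with hu₃
  set v₃ : EuclideanSpace ℝ (Fin 2) := y₄ - y₃ with hv₃
  have hang1 : ∠ y₂ y₁ y₄ = InnerProductGeometry.angle u₁ v₁ := rfl
  have hang3 : ∠ y₂ y₃ y₄ = InnerProductGeometry.angle u₃ v₃ := rfl
  have h40 : y₄ 0 = (1-b-c) * y₁ 0 + b * y₂ 0 + c * y₃ 0 := by
    rw [hy]; simp [PiLp.add_apply, PiLp.smul_apply, smul_eq_mul]
  have h41 : y₄ 1 = (1-b-c) * y₁ 1 + b * y₂ 1 + c * y₃ 1 := by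
    rw [hy]; simp [PiLp.add_apply, PiLp.smul_apply, smul_eq_mul]
  have hsign : (u₁ 0 * v₁ 1 - u₁ 1 * v₁ 0) * (u₃ 0 * v₃ 1 - u₃ 1 * v₃ 0) ≤ 0 := by
    have hceq : (u₁ 0 * v₁ 1 - u₁ 1 * v₁ 0) * (u₃ 0 * v₃ 1 - u₃ 1 * v₃ 0)
        = -((1-b-c) * c * ((y₂ 0 - y₁ 0)*(y₃ 1 - y₁ 1) - (y₂ 1 - y₁ 1)*(y₃ 0 - y₁ 0))^2) := by
      simp only [hu₁, hv₁, hu₃, hv₃, PiLp.sub_apply]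
      rw [h40, h41]; ring
    rw [hceq]
    have := mul_nonneg (mul_nonneg ha hc)
      (sq_nonneg ((y₂ 0 - y₁ 0)*(y₃ 1 - y₁ 1) - (y₂ 1 - y₁ 1)*(y₃ 0 - y₁ 0)))
    linarith
  have hid : (inner ℝ u₁ v₁ : ℝ) * (inner ℝ u₃ v₃ : ℝ)
      + (u₁ 0 * v₁ 1 - u₁ 1 * v₁ 0) * (u₃ 0 * v₃ 1 - u₃ 1 * v₃ 0)
      = ((dist y₁ y₂)^2*(dist y₃ y₄)^2 + (dist y₁ y₄)^2*(dist y₂ y₃)^2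
          - (dist y₁ y₃)^2*(dist y₂ y₄)^2)/2 := by
    rw [inner_coord, inner_coord, dist_sq_coord, dist_sq_coord, dist_sq_coord, dist_sq_coord,
      dist_sq_coord, dist_sq_coord]
    simp only [hu₁, hv₁, hu₃, hv₃, PiLp.sub_apply]
    ring
  have hn1 : ‖u₁‖ = dist y₁ y₂ := by rw [hu₁, ← dist_eq_norm, dist_comm]
  have hn2 : ‖v₁‖ = dist y₁ y₄ := by rw [hv₁, ← dist_eq_norm, dist_comm]
  have hn3 : ‖u₃‖ = dist y₂ y₃ := by rw [hu₃, ← dist_eq_norm, dist_comm]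
  have hn4 : ‖v₃‖ = dist y₃ y₄ := by rw [hv₃, ← dist_eq_norm, dist_comm]
  have d12 : (0:ℝ) < dist y₁ y₂ := dist_pos.2 h12
  have d13 : (0:ℝ) < dist y₁ y₃ := dist_pos.2 h13
  have d14 : (0:ℝ) < dist y₁ y₄ := dist_pos.2 h14
  have d23 : (0:ℝ) < dist y₂ y₃ := dist_pos.2 h23
  have d24 : (0:ℝ) < dist y₂ y₄ := dist_pos.2 h24
  have d34 : (0:ℝ) < dist y₃ y₄ := dist_pos.2 h34
  have hcos := cos_sum_key u₁ v₁ u₃ v₃ hsign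
  rw [hid, hn1, hn2, hn3, hn4] at hcos
  have hcos2 : Real.cos (∠ y₂ y₁ y₄ + ∠ y₂ y₃ y₄)
      = ((dist y₁ y₂ * dist y₃ y₄)^2 + (dist y₁ y₄ * dist y₂ y₃)^2
          - (dist y₁ y₃ * dist y₂ y₄)^2) /
        (2 * (dist y₁ y₂ * dist y₃ y₄) * (dist y₁ y₄ * dist y₂ y₃)) := by
    rw [hang1, hang3, eq_div_iff (by positivity)]
    nlinarith [hcos]
  have hS0 : 0 ≤ ∠ y₂ y₁ y₄ + ∠ y₂ y₃ y₄ :=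
    add_nonneg (EuclideanGeometry.angle_nonneg _ _ _) (EuclideanGeometry.angle_nonneg _ _ _)
  have hSpi : ∠ y₂ y₁ y₄ + ∠ y₂ y₃ y₄ ≤ Real.pi := by
    have m1 : ∠ y₂ y₁ y₄ ≤ ∠ y₂ y₁ y₃ := by
      have hc1 : v₁ = b • u₁ + c • (y₃ - y₁) := by rw [hv₁, hu₁, hy]; module
      have := angle_combo_le u₁ (y₃ - y₁) b c hb hc
        (sub_ne_zero.2 (Ne.symm h12)) (sub_ne_zero.2 (Ne.symm h13))
        (hc1 ▸ sub_ne_zero.2 (Ne.symm h14))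
      rw [hang1, hc1]
      exact this
    have m2 : ∠ y₂ y₃ y₄ ≤ ∠ y₂ y₃ y₁ := by
      have hc3 : v₃ = b • u₃ + (1-b-c) • (y₁ - y₃) := by rw [hv₃, hu₃, hy]; module
      have := angle_combo_le u₃ (y₁ - y₃) b (1-b-c) hb ha
        (sub_ne_zero.2 h23) (sub_ne_zero.2 h13)
        (hc3 ▸ sub_ne_zero.2 (Ne.symm h34))
      rw [hang3, hc3]
      exact this
    have tri := EuclideanGeometry.angle_add_angle_add_angle_eq_pi
      (p₁ := y₂) (p₂ := y₁) y₃ h12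
    have hcm : ∠ y₂ y₃ y₁ = ∠ y₁ y₃ y₂ := EuclideanGeometry.angle_comm _ _ _
    have hnn := EuclideanGeometry.angle_nonneg y₃ y₂ y₁
    linarith
  rw [show crelleF (dist y₁ y₃ * dist y₂ y₄) (dist y₁ y₂ * dist y₃ y₄) (dist y₁ y₄ * dist y₂ y₃)
      = Real.arccos (((dist y₁ y₂ * dist y₃ y₄)^2 + (dist y₁ y₄ * dist y₂ y₃)^2
          - (dist y₁ y₃ * dist y₂ y₄)^2) /
        (2 * (dist y₁ y₂ * dist y₃ y₄) * (dist y₁ y₄ * dist y₂ y₃))) by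
      unfold crelleF; ring_nf]
  rw [← hcos2, Real.arccos_cos hS0 hSpi]

private lemma angle_eq_crelleF (p q r : EuclideanSpace ℝ (Fin 2)) (hpq : p ≠ q) (hpr : p ≠ r) :
    ∠ q p r = crelleF (dist q r) (dist p q) (dist p r) := by
  have law := EuclideanGeometry.law_cos q p r
  have hq : (0:ℝ) < dist p q := dist_pos.2 hpq
  have hr : (0:ℝ) < dist p r := dist_pos.2 hpr
  have hc : Real.cos (∠ q p r) =
      ((dist p q)^2 + (dist p r)^2 - (dist q r)^2)/(2*dist p q*dist p r) := by
    rw [eq_div_iff (by positivity)]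
    rw [dist_comm p q, dist_comm p r]
    nlinarith [law]
  unfold crelleF
  rw [← hc, Real.arccos_cos (EuclideanGeometry.angle_nonneg _ _ _)
    (EuclideanGeometry.angle_le_pi _ _ _)]

private noncomputable def mk2 (a b : ℝ) : EuclideanSpace ℝ (Fin 2) :=
  (WithLp.equiv 2 (Fin 2 → ℝ)).symm ![a, b]

/-- If `x₄` lies in the interior of the triangle `x₁x₂x₃`, then the Crelle triangle
(with side lengths `x₁x₂·x₃x₄`, `x₁x₃·x₂x₄`, `x₁x₄·x₂x₃`) has angles
`α₁₂ + α₂₁`, `α₁₃ + α₃₁`, `α₂₃ + α₃₂`. -/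
theorem crelle_triangle_angles_interior_point (x₁ x₂ x₃ x₄ : EuclideanSpace ℝ (Fin 2))
    (h12 : x₁ ≠ x₂) (h13 : x₁ ≠ x₃) (h14 : x₁ ≠ x₄)
    (h23 : x₂ ≠ x₃) (h24 : x₂ ≠ x₄) (h34 : x₃ ≠ x₄)
    (h4 : x₄ ∈ interior (convexHull ℝ ({x₁, x₂, x₃} : Set (EuclideanSpace ℝ (Fin 2))))) :
    (∃ P Q R : EuclideanSpace ℝ (Fin 2),
      ({dist P Q, dist P R, dist Q R} : Multiset ℝ) =
        ({dist x₁ x₂ * dist x₃ x₄, dist x₁ x₃ * dist x₂ x₄, dist x₁ x₄ * dist x₂ x₃} : Multiset ℝ)) ∧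
    ∀ P Q R : EuclideanSpace ℝ (Fin 2),
      ({dist P Q, dist P R, dist Q R} : Multiset ℝ) =
        ({dist x₁ x₂ * dist x₃ x₄, dist x₁ x₃ * dist x₂ x₄, dist x₁ x₄ * dist x₂ x₃} : Multiset ℝ) →
      ({∠ Q P R, ∠ P Q R, ∠ P R Q} : Multiset ℝ) =
        ({∠ x₃ x₁ x₄ + ∠ x₃ x₂ x₄, ∠ x₂ x₁ x₄ + ∠ x₂ x₃ x₄, ∠ x₁ x₂ x₄ + ∠ x₁ x₃ x₄} : Multiset ℝ) := by
  constructor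
  · -- existence of the Crelle triangle
    set ar := (x₁ 0 - x₂ 0)*(x₃ 0 - x₄ 0) - (x₁ 1 - x₂ 1)*(x₃ 1 - x₄ 1) with har
    set ai := (x₁ 0 - x₂ 0)*(x₃ 1 - x₄ 1) + (x₁ 1 - x₂ 1)*(x₃ 0 - x₄ 0) with hai
    set br := (x₁ 0 - x₃ 0)*(x₂ 0 - x₄ 0) - (x₁ 1 - x₃ 1)*(x₂ 1 - x₄ 1) with hbr
    set bi := (x₁ 0 - x₃ 0)*(x₂ 1 - x₄ 1) + (x₁ 1 - x₃ 1)*(x₂ 0 - x₄ 0) with hbi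
    refine ⟨0, mk2 ar ai, mk2 br bi, ?_⟩
    have e1 : dist (0 : EuclideanSpace ℝ (Fin 2)) (mk2 ar ai) = dist x₁ x₂ * dist x₃ x₄ := by
      have h2 : (dist (0 : EuclideanSpace ℝ (Fin 2)) (mk2 ar ai)) ^ 2
          = (dist x₁ x₂ * dist x₃ x₄) ^ 2 := by
        rw [dist_sq_coord, mul_pow, dist_sq_coord, dist_sq_coord]
        show ((0:ℝ) - ar)^2 + ((0:ℝ) - ai)^2 = _
        rw [har, hai]; ring
      exact (sq_eq_sq₀ dist_nonneg (by positivity)).1 h2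
    have e2 : dist (0 : EuclideanSpace ℝ (Fin 2)) (mk2 br bi) = dist x₁ x₃ * dist x₂ x₄ := by
      have h2 : (dist (0 : EuclideanSpace ℝ (Fin 2)) (mk2 br bi)) ^ 2
          = (dist x₁ x₃ * dist x₂ x₄) ^ 2 := by
        rw [dist_sq_coord, mul_pow, dist_sq_coord, dist_sq_coord]
        show ((0:ℝ) - br)^2 + ((0:ℝ) - bi)^2 = _
        rw [hbr, hbi]; ring
      exact (sq_eq_sq₀ dist_nonneg (by positivity)).1 h2
    have e3 : dist (mk2 ar ai) (mk2 br bi) = dist x₁ x₄ * dist x₂ x₃ := by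
      have h2 : (dist (mk2 ar ai) (mk2 br bi)) ^ 2 = (dist x₁ x₄ * dist x₂ x₃) ^ 2 := by
        rw [dist_sq_coord, mul_pow, dist_sq_coord, dist_sq_coord]
        show (ar - br)^2 + (ai - bi)^2 = _
        rw [har, hai, hbr, hbi]; ring
      exact (sq_eq_sq₀ dist_nonneg (by positivity)).1 h2
    rw [e1, e2, e3]
  · -- all such triangles have the stated angles
    obtain ⟨a, b, c, ha, hb, hc, habc, hx4⟩ :
        ∃ a b c : ℝ, 0 ≤ a ∧ 0 ≤ b ∧ 0 ≤ c ∧ a + b + c = 1 ∧ x₄ = a • x₁ + b • x₂ + c • x₃ := by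
      have h4' := interior_subset h4
      rw [show ({x₁, x₂, x₃} : Set (EuclideanSpace ℝ (Fin 2))) = insert x₁ {x₂, x₃} from rfl,
        convexHull_insert ⟨x₂, by simp⟩, convexHull_pair] at h4'
      rw [mem_convexJoin] at h4'
      obtain ⟨u, hu, v, hv, hseg⟩ := h4'
      rw [Set.mem_singleton_iff] at hu
      subst hu
      obtain ⟨s, t, hs, ht, hst, rfl⟩ := hv
      obtain ⟨p, q, hp, hq, hpq, heq⟩ := hseg
      refine ⟨p, q*s, q*t, hp, mul_nonneg hq hs, mul_nonneg hq ht, by nlinarith, ?_⟩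
      rw [← heq, smul_add, smul_smul, smul_smul, add_assoc]
    intro P Q R h
    have hA : (0:ℝ) < dist x₁ x₂ * dist x₃ x₄ := mul_pos (dist_pos.2 h12) (dist_pos.2 h34)
    have hB : (0:ℝ) < dist x₁ x₃ * dist x₂ x₄ := mul_pos (dist_pos.2 h13) (dist_pos.2 h24)
    have hC : (0:ℝ) < dist x₁ x₄ * dist x₂ x₃ := mul_pos (dist_pos.2 h14) (dist_pos.2 h23)
    -- the three target angle sums
    have TA : ∠ x₃ x₁ x₄ + ∠ x₃ x₂ x₄ =
        crelleF (dist x₁ x₂ * dist x₃ x₄) (dist x₁ x₃ * dist x₂ x₄) (dist x₁ x₄ * dist x₂ x₃) := by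
      have := pair_angle x₁ x₃ x₂ x₄ h13 h12 h14 (Ne.symm h23) h34 h24 a c b ha hc hb
        (by linarith) (by rw [hx4]; module)
      rw [dist_comm x₃ x₂] at this
      exact this
    have TB : ∠ x₂ x₁ x₄ + ∠ x₂ x₃ x₄ =
        crelleF (dist x₁ x₃ * dist x₂ x₄) (dist x₁ x₂ * dist x₃ x₄) (dist x₁ x₄ * dist x₂ x₃) :=
      pair_angle x₁ x₂ x₃ x₄ h12 h13 h14 h23 h24 h34 a b c ha hb hc habc hx4
    have TC : ∠ x₁ x₂ x₄ + ∠ x₁ x₃ x₄ =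
        crelleF (dist x₁ x₄ * dist x₂ x₃) (dist x₁ x₂ * dist x₃ x₄) (dist x₁ x₃ * dist x₂ x₄) := by
      have := pair_angle x₂ x₁ x₃ x₄ (Ne.symm h12) h23 h24 h13 h14 h34 b a c hb ha hc
        (by linarith) (by rw [hx4]; module)
      rw [mul_comm (dist x₂ x₃), dist_comm x₂ x₁, mul_comm (dist x₂ x₄)] at this
      exact this
    rw [TA, TB, TC]
    set A := dist x₁ x₂ * dist x₃ x₄
    set B := dist x₁ x₃ * dist x₂ x₄
    set C := dist x₁ x₄ * dist x₂ x₃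
    rcases ms3 h with ⟨e1,e2,e3⟩|⟨e1,e2,e3⟩|⟨e1,e2,e3⟩|⟨e1,e2,e3⟩|⟨e1,e2,e3⟩|⟨e1,e2,e3⟩
    · have hPQ : P ≠ Q := dist_pos.1 (by rw [e1]; exact hA)
      have hPR : P ≠ R := dist_pos.1 (by rw [e2]; exact hB)
      have hQR : Q ≠ R := dist_pos.1 (by rw [e3]; exact hC)
      rw [angle_eq_crelleF P Q R hPQ hPR,
        angle_eq_crelleF Q P R (Ne.symm hPQ) hQR,
        angle_eq_crelleF R P Q (Ne.symm hPR) (Ne.symm hQR),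
        dist_comm Q P, dist_comm R P, dist_comm R Q, e1, e2, e3]
      exact mswap13 _ _ _
    · have hPQ : P ≠ Q := dist_pos.1 (by rw [e1]; exact hA)
      have hPR : P ≠ R := dist_pos.1 (by rw [e2]; exact hC)
      have hQR : Q ≠ R := dist_pos.1 (by rw [e3]; exact hB)
      rw [angle_eq_crelleF P Q R hPQ hPR,
        angle_eq_crelleF Q P R (Ne.symm hPQ) hQR,
        angle_eq_crelleF R P Q (Ne.symm hPR) (Ne.symm hQR),
        dist_comm Q P, dist_comm R P, dist_comm R Q, e1, e2, e3,
        ← crelleF_symm A B C]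
      exact (mrot _ _ _).symm
    · have hPQ : P ≠ Q := dist_pos.1 (by rw [e1]; exact hB)
      have hPR : P ≠ R := dist_pos.1 (by rw [e2]; exact hA)
      have hQR : Q ≠ R := dist_pos.1 (by rw [e3]; exact hC)
      rw [angle_eq_crelleF P Q R hPQ hPR,
        angle_eq_crelleF Q P R (Ne.symm hPQ) hQR,
        angle_eq_crelleF R P Q (Ne.symm hPR) (Ne.symm hQR),
        dist_comm Q P, dist_comm R P, dist_comm R Q, e1, e2, e3,
        ← crelleF_symm C A B]
      exact (mrot2 _ _ _).symm
    · have hPQ : P ≠ Q := dist_pos.1 (by rw [e1]; exact hB)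
      have hPR : P ≠ R := dist_pos.1 (by rw [e2]; exact hC)
      have hQR : Q ≠ R := dist_pos.1 (by rw [e3]; exact hA)
      rw [angle_eq_crelleF P Q R hPQ hPR,
        angle_eq_crelleF Q P R (Ne.symm hPQ) hQR,
        angle_eq_crelleF R P Q (Ne.symm hPR) (Ne.symm hQR),
        dist_comm Q P, dist_comm R P, dist_comm R Q, e1, e2, e3,
        ← crelleF_symm C A B, ← crelleF_symm B A C]
      exact (mswap23 _ _ _).symm
    · have hPQ : P ≠ Q := dist_pos.1 (by rw [e1]; exact hC)
      have hPR : P ≠ R := dist_pos.1 (by rw [e2]; exact hA)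
      have hQR : Q ≠ R := dist_pos.1 (by rw [e3]; exact hB)
      rw [angle_eq_crelleF P Q R hPQ hPR,
        angle_eq_crelleF Q P R (Ne.symm hPQ) hQR,
        angle_eq_crelleF R P Q (Ne.symm hPR) (Ne.symm hQR),
        dist_comm Q P, dist_comm R P, dist_comm R Q, e1, e2, e3,
        ← crelleF_symm B A C, ← crelleF_symm A B C]
      exact (mswap12 _ _ _).symm
    · have hPQ : P ≠ Q := dist_pos.1 (by rw [e1]; exact hC)
      have hPR : P ≠ R := dist_pos.1 (by rw [e2]; exact hB)
      have hQR : Q ≠ R := dist_pos.1 (by rw [e3]; exact hA)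
      rw [angle_eq_crelleF P Q R hPQ hPR,
        angle_eq_crelleF Q P R (Ne.symm hPQ) hQR,
        angle_eq_crelleF R P Q (Ne.symm hPR) (Ne.symm hQR),
        dist_comm Q P, dist_comm R P, dist_comm R Q, e1, e2, e3,
        ← crelleF_symm A B C, ← crelleF_symm B A C, ← crelleF_symm C A B]
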